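/- Let n ≥ 4, let 2 ≤ j ≤ n, and let w ∈ W be a basic involution with w(1) = −j. Define u = s_j s_{j+1}⋯s_{n−1} s_n s_{n−2} s_{n−3}⋯s_2 s_1 ∈ W. Then: (a) if j < n, u is the permutation with u(1) = −j, u(i) = i−1 for 2 ≤ i ≤ j, u(i) = i for j < i ≤ n−1, and u(n) = −n; if j = n, u is the permutation with u(1) = −n, u(i) = i−1 for 2 ≤ i ≤ n−1, and u(n) = −(n−1); (b) u^{−1}w lies in the subgroup W̃ generated by s_2,…,s_n (equivalently, u^{−1}w fixes 1); and (c) ℓ(u s_i) = ℓ(u) + 1 for every 2 ≤ i ≤ n. -/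

import Mathlib

set_option maxHeartbeats 1000000


/-!
The Weyl group of type `Dₙ`, realized as the group of permutations `w` of `ℤ`
supported on `{±1, …, ±n}` with `w (-i) = - w i` and an even number of sign changes.
-/

open Equiv

/-- The simple reflections of type `Dₙ`, indexed by `i ∈ {1, …, n}`:
`sᵢ = (i, i+1)(-i, -(i+1))` for `1 ≤ i ≤ n - 1`, and
`sₙ = (n-1, -n)(-(n-1), n)`. -/
def simpleRefl (n : ℕ) (i : ℕ) : Equiv.Perm ℤ :=
  if i < n then Equiv.swap (i : ℤ) ((i : ℤ) + 1) * Equiv.swap (-(i : ℤ)) (-((i : ℤ) + 1))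
  else Equiv.swap ((n : ℤ) - 1) (-(n : ℤ)) * Equiv.swap (-((n : ℤ) - 1)) (n : ℤ)

/-- A word in the letters `{1, …, n}` (indices of simple reflections). -/
def IsWord (n : ℕ) (L : List ℕ) : Prop := ∀ i ∈ L, 1 ≤ i ∧ i ≤ n

/-- The product `s_{i₁} ⋯ s_{i_l}` of the word `L = [i₁, …, i_l]`. -/
def wordProd (n : ℕ) (L : List ℕ) : Equiv.Perm ℤ := (L.map (simpleRefl n)).prod

/-- Membership in the Weyl group `W` of type `Dₙ`: a permutation of `ℤ` commuting with
negation, fixing every integer of absolute value `> n`, and with an even number of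
`i ∈ {1, …, n}` such that `w i < 0`. -/
def IsD (n : ℕ) (w : Equiv.Perm ℤ) : Prop :=
  (∀ i : ℤ, w (-i) = -(w i)) ∧ (∀ i : ℤ, (n : ℤ) < |i| → w i = i) ∧
    Even (((Finset.Icc (1 : ℤ) (n : ℤ)).filter fun i => w i < 0).card)

/-- The length `ℓ(w)`: the minimal number of factors in an expression of `w` as a
product of simple reflections. -/
noncomputable def weylLength (n : ℕ) (w : Equiv.Perm ℤ) : ℕ :=
  sInf {l | ∃ L : List ℕ, IsWord n L ∧ L.length = l ∧ wordProd n L = w}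

/-- `L` is a reduced decomposition of `w`. -/
def IsReducedWord (n : ℕ) (w : Equiv.Perm ℤ) (L : List ℕ) : Prop :=
  IsWord n L ∧ wordProd n L = w ∧ L.length = weylLength n w

/-- `w` is a basic involution: `w ∈ W`, `w² = id`, and `w i ≠ -i` for all `i ∈ {1, …, n}`. -/
def IsBasicInvolution (n : ℕ) (w : Equiv.Perm ℤ) : Prop :=
  IsD n w ∧ w * w = 1 ∧ ∀ i : ℤ, 1 ≤ i → i ≤ (n : ℤ) → w i ≠ -i

/-- The word `[j, j+1, …, n-1, n, n-2, n-3, …, 2, 1]`,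
i.e. `u = s_j s_{j+1} ⋯ s_{n-1} sₙ s_{n-2} s_{n-3} ⋯ s₂ s₁`. -/
def uWordPlus (n j : ℕ) : List ℕ :=
  ((List.range (n - j)).map fun t => j + t) ++ [n] ++ (List.range (n - 2)).reverse.map (· + 1)


-- ================= auxiliary development =================

/-- The basic pair statistic. -/
def tt (c d : ℤ) : ℕ :=
  if 0 < c then (if -c < d ∧ d < c then 1 else 0)
  else (1 + if -c < d ∨ d < c then 1 else 0)

lemma tt_symm_le (c d : ℤ) : tt d c ≤ tt c d + 1 := by
  unfold tt; split_ifs <;> omega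

lemma tt_flip_le (c d : ℤ) : tt (-d) (-c) ≤ tt c d + 1 := by
  unfold tt; split_ifs <;> omega

lemma tt_neg_right (c d : ℤ) : tt c (-d) = tt c d := by
  unfold tt; split_ifs <;> omega

lemma tt_symm_ne {c d : ℤ} (hc : c ≠ 0) (hd : d ≠ 0) (h1 : c ≠ d) (h2 : c ≠ -d) :
    tt c d ≠ tt d c := by
  unfold tt; split_ifs <;> omega

lemma tt_flip_ne {c d : ℤ} (hc : c ≠ 0) (hd : d ≠ 0) (h1 : c ≠ d) (h2 : c ≠ -d) :
    tt c d ≠ tt (-d) (-c) := by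
  unfold tt; split_ifs <;> omega

lemma sval {n i : ℕ} (h1 : 1 ≤ i) (h2 : i < n) (x : ℤ) :
    simpleRefl n i x = if x = (i : ℤ) then (i : ℤ) + 1 else if x = (i : ℤ) + 1 then (i : ℤ)
      else if x = -(i : ℤ) then -((i : ℤ) + 1) else if x = -((i : ℤ) + 1) then -(i : ℤ) else x := by
  simp only [simpleRefl, if_pos h2, Equiv.Perm.mul_apply, Equiv.swap_apply_def]
  split_ifs <;> omega

lemma snval {n : ℕ} (hn : 2 ≤ n) (x : ℤ) :
    simpleRefl n n x = if x = (n : ℤ) - 1 then -(n : ℤ) else if x = -(n : ℤ) then (n : ℤ) - 1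
      else if x = -((n : ℤ) - 1) then (n : ℤ) else if x = (n : ℤ) then -((n : ℤ) - 1) else x := by
  have h : ¬ (n < n) := lt_irrefl n
  simp only [simpleRefl, h, if_false, Equiv.Perm.mul_apply, Equiv.swap_apply_def]
  split_ifs <;> omega

lemma srefl_odd {n i : ℕ} (hn : 2 ≤ n) (h1 : 1 ≤ i) (hi : i ≤ n) (x : ℤ) :
    simpleRefl n i (-x) = -(simpleRefl n i x) := by
  rcases lt_or_eq_of_le hi with h | h
  · rw [sval h1 h, sval h1 h]; split_ifs <;> omega
  · subst h; rw [snval hn, snval hn]; split_ifs <;> omega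

lemma srefl_supp {n i : ℕ} (hn : 2 ≤ n) (h1 : 1 ≤ i) (hi : i ≤ n) {x : ℤ}
    (hx : (n : ℤ) < |x|) : simpleRefl n i x = x := by
  rcases abs_cases x with ⟨h, _⟩ | ⟨h, _⟩ <;> rw [h] at hx
  · rcases lt_or_eq_of_le hi with h' | h'
    · rw [sval h1 h']; split_ifs <;> omega
    · subst h'; rw [snval hn]; split_ifs <;> omega
  · rcases lt_or_eq_of_le hi with h' | h'
    · rw [sval h1 h']; split_ifs <;> omega
    · subst h'; rw [snval hn]; split_ifs <;> omega

lemma wordProd_nil (n : ℕ) : wordProd n [] = 1 := rfl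

lemma wordProd_cons (n : ℕ) (i : ℕ) (L : List ℕ) :
    wordProd n (i :: L) = simpleRefl n i * wordProd n L := by
  simp [wordProd]

lemma wordProd_append (n : ℕ) (L1 L2 : List ℕ) :
    wordProd n (L1 ++ L2) = wordProd n L1 * wordProd n L2 := by
  simp [wordProd]

lemma wordProd_odd {n : ℕ} (hn : 2 ≤ n) {L : List ℕ} (hL : IsWord n L) (x : ℤ) :
    wordProd n L (-x) = -(wordProd n L x) := by
  induction L generalizing x with
  | nil => simp [wordProd_nil]
  | cons i L ih =>
    have hi := hL i (by simp)
    have hL' : IsWord n L := fun k hk => hL k (by simp [hk])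
    rw [wordProd_cons, Equiv.Perm.mul_apply, Equiv.Perm.mul_apply, ih hL',
      srefl_odd hn hi.1 hi.2]

lemma wordProd_supp {n : ℕ} (hn : 2 ≤ n) {L : List ℕ} (hL : IsWord n L) {x : ℤ}
    (hx : (n : ℤ) < |x|) : wordProd n L x = x := by
  induction L with
  | nil => simp [wordProd_nil]
  | cons i L ih =>
    have hi := hL i (by simp)
    have hL' : IsWord n L := fun k hk => hL k (by simp [hk])
    rw [wordProd_cons, Equiv.Perm.mul_apply, ih hL', srefl_supp hn hi.1 hi.2 hx]

section
variable {n : ℕ}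
/-- The set of pairs `1 ≤ a < b ≤ n`. -/
noncomputable def PR (n : ℕ) : Finset (ℤ × ℤ) :=
  (Finset.Icc (1 : ℤ) (n : ℤ) ×ˢ Finset.Icc (1 : ℤ) (n : ℤ)).filter fun p => p.1 < p.2

lemma mem_PR {p : ℤ × ℤ} : p ∈ PR n ↔ 1 ≤ p.1 ∧ p.1 < p.2 ∧ p.2 ≤ (n : ℤ) := by
  simp only [PR, Finset.mem_filter, Finset.mem_product, Finset.mem_Icc]
  constructor
  · rintro ⟨⟨h1, h2⟩, h3⟩; exact ⟨h1.1, h3, h2.2⟩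
  · rintro ⟨h1, h2, h3⟩; exact ⟨⟨⟨h1, by omega⟩, ⟨by omega, h3⟩⟩, h2⟩

/-- The inversion statistic. -/
noncomputable def NN (n : ℕ) (w : Equiv.Perm ℤ) : ℕ := ∑ p ∈ PR n, tt (w p.1) (w p.2)

lemma NN_one : NN n 1 = 0 := by
  apply Finset.sum_eq_zero
  intro p hp
  rw [mem_PR] at hp
  simp only [Equiv.Perm.one_apply]
  unfold tt; split_ifs <;> omega

/-- Swap lemma for `sᵢ`, `i < n`. -/
lemma NN_mul_lt (w : Equiv.Perm ℤ) {i : ℕ} (h1 : 1 ≤ i) (h2 : i < n) :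
    NN n (w * simpleRefl n i) + tt (w (i : ℤ)) (w ((i : ℤ) + 1))
      = NN n w + tt (w ((i : ℤ) + 1)) (w (i : ℤ)) := by
  have hsw : ∀ x : ℤ, 1 ≤ x → x ≤ (n : ℤ) →
      simpleRefl n i x = Equiv.swap (i : ℤ) ((i : ℤ) + 1) x := by
    intro x hx1 hx2
    rw [sval h1 h2, Equiv.swap_apply_def]
    split_ifs <;> omega
  have hc : ((i : ℤ), (i : ℤ) + 1) ∈ PR n := by rw [mem_PR]; constructor <;> [omega; constructor <;> omega]
  have key : ∀ v : Equiv.Perm ℤ,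
      NN n v = (∑ p ∈ (PR n).erase ((i : ℤ), (i : ℤ) + 1), tt (v p.1) (v p.2))
        + tt (v (i : ℤ)) (v ((i : ℤ) + 1)) := by
    intro v
    rw [NN, ← Finset.sum_erase_add _ _ hc]
  rw [key (w * simpleRefl n i), key w]
  have hmain : ∑ p ∈ (PR n).erase ((i : ℤ), (i : ℤ) + 1),
      tt ((w * simpleRefl n i) p.1) ((w * simpleRefl n i) p.2)
      = ∑ p ∈ (PR n).erase ((i : ℤ), (i : ℤ) + 1), tt (w p.1) (w p.2) := by
    apply Finset.sum_nbij'
      (fun p => (Equiv.swap (i : ℤ) ((i : ℤ) + 1) p.1, Equiv.swap (i : ℤ) ((i : ℤ) + 1) p.2))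
      (fun p => (Equiv.swap (i : ℤ) ((i : ℤ) + 1) p.1, Equiv.swap (i : ℤ) ((i : ℤ) + 1) p.2))
    · intro p hp
      rw [Finset.mem_erase, mem_PR] at hp ⊢
      obtain ⟨hne, hp1, hp2, hp3⟩ := hp
      have hne' : ¬(p.1 = (i : ℤ) ∧ p.2 = (i : ℤ) + 1) := by
        intro ⟨e1, e2⟩; exact hne (Prod.ext e1 e2)
      refine ⟨?_, ?_⟩
      · intro hEq
        have e1 := congrArg Prod.fst hEq
        have e2 := congrArg Prod.snd hEq
        simp only [Equiv.swap_apply_def] at e1 e2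
        revert e1 e2
        split_ifs <;> omega
      · dsimp only
        simp only [Equiv.swap_apply_def]
        split_ifs <;> omega
    · intro p hp
      rw [Finset.mem_erase, mem_PR] at hp ⊢
      obtain ⟨hne, hp1, hp2, hp3⟩ := hp
      have hne' : ¬(p.1 = (i : ℤ) ∧ p.2 = (i : ℤ) + 1) := by
        intro ⟨e1, e2⟩; exact hne (Prod.ext e1 e2)
      refine ⟨?_, ?_⟩
      · intro hEq
        have e1 := congrArg Prod.fst hEq
        have e2 := congrArg Prod.snd hEq
        simp only [Equiv.swap_apply_def] at e1 e2
        revert e1 e2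
        split_ifs <;> omega
      · dsimp only
        simp only [Equiv.swap_apply_def]
        split_ifs <;> omega
    · intro p _; simp
    · intro p _; simp
    · intro p hp
      rw [Finset.mem_erase, mem_PR] at hp
      obtain ⟨hne, hp1, hp2, hp3⟩ := hp
      rw [Equiv.Perm.mul_apply, Equiv.Perm.mul_apply, hsw p.1 hp1 (by omega),
        hsw p.2 (by omega) hp3]
  rw [hmain]
  have e1 : (w * simpleRefl n i) (i : ℤ) = w ((i : ℤ) + 1) := by
    rw [Equiv.Perm.mul_apply, hsw (i : ℤ) (by omega) (by omega), Equiv.swap_apply_left]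
  have e2 : (w * simpleRefl n i) ((i : ℤ) + 1) = w (i : ℤ) := by
    rw [Equiv.Perm.mul_apply, hsw ((i : ℤ) + 1) (by omega) (by omega), Equiv.swap_apply_right]
  rw [e1, e2]
  omega

/-- Swap lemma for `sₙ`. -/
lemma NN_mul_n (hn : 4 ≤ n) (w : Equiv.Perm ℤ) (hodd : ∀ x : ℤ, w (-x) = -(w x)) :
    NN n (w * simpleRefl n n) + tt (w ((n : ℤ) - 1)) (w (n : ℤ))
      = NN n w + tt (-(w (n : ℤ))) (-(w ((n : ℤ) - 1))) := by
  have hn2 : 2 ≤ n := by omega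
  have hc : ((n : ℤ) - 1, (n : ℤ)) ∈ PR n := by rw [mem_PR]; refine ⟨by omega, by omega, by omega⟩
  have key : ∀ v : Equiv.Perm ℤ,
      NN n v = (∑ p ∈ (PR n).erase ((n : ℤ) - 1, (n : ℤ)), tt (v p.1) (v p.2))
        + tt (v ((n : ℤ) - 1)) (v (n : ℤ)) := by
    intro v
    rw [NN, ← Finset.sum_erase_add _ _ hc]
  rw [key (w * simpleRefl n n), key w]
  have hmain : ∑ p ∈ (PR n).erase ((n : ℤ) - 1, (n : ℤ)),
      tt ((w * simpleRefl n n) p.1) ((w * simpleRefl n n) p.2)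
      = ∑ p ∈ (PR n).erase ((n : ℤ) - 1, (n : ℤ)), tt (w p.1) (w p.2) := by
    apply Finset.sum_nbij'
      (fun p => (p.1, Equiv.swap ((n : ℤ) - 1) (n : ℤ) p.2))
      (fun p => (p.1, Equiv.swap ((n : ℤ) - 1) (n : ℤ) p.2))
    · intro p hp
      rw [Finset.mem_erase, mem_PR] at hp ⊢
      obtain ⟨hne, hp1, hp2, hp3⟩ := hp
      have hne' : ¬(p.1 = (n : ℤ) - 1 ∧ p.2 = (n : ℤ)) := by
        intro ⟨e1, e2⟩; exact hne (Prod.ext e1 e2)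
      refine ⟨?_, ?_⟩
      · intro hEq
        have e1 := congrArg Prod.fst hEq
        have e2 := congrArg Prod.snd hEq
        simp only [Equiv.swap_apply_def] at e1 e2
        revert e1 e2
        split_ifs <;> omega
      · dsimp only
        simp only [Equiv.swap_apply_def]
        split_ifs <;> omega
    · intro p hp
      rw [Finset.mem_erase, mem_PR] at hp ⊢
      obtain ⟨hne, hp1, hp2, hp3⟩ := hp
      have hne' : ¬(p.1 = (n : ℤ) - 1 ∧ p.2 = (n : ℤ)) := by
        intro ⟨e1, e2⟩; exact hne (Prod.ext e1 e2)
      refine ⟨?_, ?_⟩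
      · intro hEq
        have e1 := congrArg Prod.fst hEq
        have e2 := congrArg Prod.snd hEq
        simp only [Equiv.swap_apply_def] at e1 e2
        revert e1 e2
        split_ifs <;> omega
      · dsimp only
        simp only [Equiv.swap_apply_def]
        split_ifs <;> omega
    · intro p _; simp
    · intro p _; simp
    · intro p hp
      rw [Finset.mem_erase, mem_PR] at hp
      obtain ⟨hne, hp1, hp2, hp3⟩ := hp
      have hne' : ¬(p.1 = (n : ℤ) - 1 ∧ p.2 = (n : ℤ)) := by
        intro ⟨e1, e2⟩; exact hne (Prod.ext e1 e2)
      have hp1' : p.1 ≤ (n : ℤ) - 2 := by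
        rcases lt_trichotomy p.1 ((n:ℤ) - 1) with h | h | h
        · omega
        · exfalso; omega
        · omega
      rw [Equiv.Perm.mul_apply, Equiv.Perm.mul_apply, snval hn2 p.1, snval hn2 p.2]
      have hfix1 : (if p.1 = (n : ℤ) - 1 then -(n : ℤ) else if p.1 = -(n : ℤ) then (n : ℤ) - 1
          else if p.1 = -((n : ℤ) - 1) then (n : ℤ) else if p.1 = (n : ℤ) then -((n : ℤ) - 1)
          else p.1) = p.1 := by split_ifs <;> omega
      rw [hfix1]
      rcases lt_trichotomy p.2 ((n:ℤ) - 1) with h | h | h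
      · have : (if p.2 = (n : ℤ) - 1 then -(n : ℤ) else if p.2 = -(n : ℤ) then (n : ℤ) - 1
          else if p.2 = -((n : ℤ) - 1) then (n : ℤ) else if p.2 = (n : ℤ) then -((n : ℤ) - 1)
          else p.2) = p.2 := by split_ifs <;> omega
        rw [this, Equiv.swap_apply_def]
        split_ifs <;> first | rfl | omega
      · -- p.2 = n - 1, so p.2 maps to -n ; swap sends p.2 to n
        have e1 : (if p.2 = (n : ℤ) - 1 then -(n : ℤ) else if p.2 = -(n : ℤ) then (n : ℤ) - 1
          else if p.2 = -((n : ℤ) - 1) then (n : ℤ) else if p.2 = (n : ℤ) then -((n : ℤ) - 1)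
          else p.2) = -(n : ℤ) := by split_ifs <;> omega
        have e2 : Equiv.swap ((n : ℤ) - 1) (n : ℤ) p.2 = (n : ℤ) := by
          rw [Equiv.swap_apply_def]; split_ifs <;> omega
        rw [e1, e2, hodd, tt_neg_right]
      · have h' : p.2 = (n : ℤ) := by omega
        have e1 : (if p.2 = (n : ℤ) - 1 then -(n : ℤ) else if p.2 = -(n : ℤ) then (n : ℤ) - 1
          else if p.2 = -((n : ℤ) - 1) then (n : ℤ) else if p.2 = (n : ℤ) then -((n : ℤ) - 1)
          else p.2) = -((n : ℤ) - 1) := by split_ifs <;> omega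
        have e2 : Equiv.swap ((n : ℤ) - 1) (n : ℤ) p.2 = (n : ℤ) - 1 := by
          rw [Equiv.swap_apply_def]; split_ifs <;> omega
        rw [e1, e2, hodd, tt_neg_right]
  rw [hmain]
  have e1 : (w * simpleRefl n n) ((n : ℤ) - 1) = -(w (n : ℤ)) := by
    rw [Equiv.Perm.mul_apply, snval hn2]
    have : (if (n : ℤ) - 1 = (n : ℤ) - 1 then -(n : ℤ) else if (n : ℤ) - 1 = -(n : ℤ) then (n : ℤ) - 1
          else if (n : ℤ) - 1 = -((n : ℤ) - 1) then (n : ℤ) else if (n : ℤ) - 1 = (n : ℤ) then -((n : ℤ) - 1)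
          else (n : ℤ) - 1) = -(n:ℤ) := by split_ifs <;> omega
    rw [this, hodd]
  have e2 : (w * simpleRefl n n) (n : ℤ) = -(w ((n : ℤ) - 1)) := by
    rw [Equiv.Perm.mul_apply, snval hn2]
    have : (if (n : ℤ) = (n : ℤ) - 1 then -(n : ℤ) else if (n : ℤ) = -(n : ℤ) then (n : ℤ) - 1
          else if (n : ℤ) = -((n : ℤ) - 1) then (n : ℤ) else if (n : ℤ) = (n : ℤ) then -((n : ℤ) - 1)
          else (n : ℤ)) = -((n:ℤ) - 1) := by split_ifs <;> omega
    rw [this, hodd]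
  rw [e1, e2]
  omega
end

lemma chainB (n : ℕ) (m : ℕ) (hm : m + 1 ≤ n - 1) (x : ℤ) :
    wordProd n ((List.range m).reverse.map (· + 1)) x =
      if x = 1 then (m : ℤ) + 1 else if 2 ≤ x ∧ x ≤ (m : ℤ) + 1 then x - 1
      else if x = -1 then -((m : ℤ) + 1) else if -((m : ℤ) + 1) ≤ x ∧ x ≤ -2 then x + 1
      else x := by
  induction m generalizing x with
  | zero => simp [wordProd_nil]; split_ifs <;> omega
  | succ m ih =>
    have hlist : ((List.range (m + 1)).reverse.map (· + 1))
        = (m + 1) :: ((List.range m).reverse.map (· + 1)) := by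
      rw [List.range_succ]
      simp
    rw [hlist, wordProd_cons, Equiv.Perm.mul_apply, ih (by omega),
      sval (by omega) (by omega)]
    push_cast
    split_ifs <;> omega

lemma chainA (n j : ℕ) (hj : 1 ≤ j) (k : ℕ) (hk : j + k ≤ n) (x : ℤ) :
    wordProd n ((List.range k).map fun t => j + t) x =
      if (j : ℤ) ≤ x ∧ x ≤ (j : ℤ) + k - 1 then x + 1 else if x = (j : ℤ) + k then (j : ℤ)
      else if -((j : ℤ) + k - 1) ≤ x ∧ x ≤ -(j : ℤ) then x - 1
      else if x = -((j : ℤ) + k) then -(j : ℤ) else x := by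
  induction k generalizing x with
  | zero => simp [wordProd_nil]; split_ifs <;> omega
  | succ k ih =>
    have hlist : ((List.range (k + 1)).map fun t => j + t)
        = ((List.range k).map fun t => j + t) ++ [j + k] := by
      rw [List.range_succ, List.map_append]
      rfl
    have hone : wordProd n [j + k] = simpleRefl n (j + k) := by
      rw [show [j + k] = (j + k) :: ([] : List ℕ) from rfl, wordProd_cons, wordProd_nil, mul_one]
    rw [hlist, wordProd_append, Equiv.Perm.mul_apply, hone]
    have hA := ih (by omega)
    by_cases h1 : x = (j : ℤ) + k
    · have hy : simpleRefl n (j + k) x = (j : ℤ) + (k : ℤ) + 1 := by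
        rw [sval (by omega) (by omega)]; push_cast; split_ifs <;> omega
      rw [hy, hA]
      trans ((j : ℤ) + (k : ℤ) + 1)
      · split_ifs <;> omega
      · push_cast; split_ifs <;> omega
    · by_cases h2 : x = (j : ℤ) + (k : ℤ) + 1
      · have hy : simpleRefl n (j + k) x = (j : ℤ) + (k : ℤ) := by
          rw [sval (by omega) (by omega)]; push_cast; split_ifs <;> omega
        rw [hy, hA]
        trans ((j : ℤ))
        · split_ifs <;> omega
        · push_cast; split_ifs <;> omega
      · by_cases h3 : x = -((j : ℤ) + (k : ℤ))
        · have hy : simpleRefl n (j + k) x = -((j : ℤ) + (k : ℤ) + 1) := by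
            rw [sval (by omega) (by omega)]; push_cast; split_ifs <;> omega
          rw [hy, hA]
          trans (-((j : ℤ) + (k : ℤ) + 1))
          · split_ifs <;> omega
          · push_cast; split_ifs <;> omega
        · by_cases h4 : x = -((j : ℤ) + (k : ℤ) + 1)
          · have hy : simpleRefl n (j + k) x = -((j : ℤ) + (k : ℤ)) := by
              rw [sval (by omega) (by omega)]; push_cast; split_ifs <;> omega
            rw [hy, hA]
            trans (-(j : ℤ))
            · split_ifs <;> omega
            · push_cast; split_ifs <;> omega
          · have hy : simpleRefl n (j + k) x = x := by
              rw [sval (by omega) (by omega)]; push_cast; split_ifs <;> omega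
            rw [hy, hA]
            by_cases h5 : (j : ℤ) ≤ x ∧ x ≤ (j : ℤ) + (k : ℤ) - 1
            · trans (x + 1)
              · split_ifs <;> omega
              · push_cast; split_ifs <;> omega
            · by_cases h6 : -((j : ℤ) + (k : ℤ) - 1) ≤ x ∧ x ≤ -(j : ℤ)
              · trans (x - 1)
                · split_ifs <;> omega
                · push_cast; split_ifs <;> omega
              · trans x
                · split_ifs <;> omega
                · push_cast; split_ifs <;> omega

lemma uval {n j : ℕ} (hn : 4 ≤ n) (hj2 : 2 ≤ j) (hjn : j ≤ n) {x : ℤ} (h1 : 1 ≤ x)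
    (h2 : x ≤ (n : ℤ)) :
    wordProd n (uWordPlus n j) x =
      if x = 1 then -(j : ℤ) else if x ≤ (j : ℤ) ∧ x ≤ (n : ℤ) - 1 then x - 1
      else if x ≤ (n : ℤ) - 1 then x
      else if j < n then -(n : ℤ) else -((n : ℤ) - 1) := by
  have hB := chainB n (n - 2) (by omega)
  have hA := chainA n j (by omega) (n - j) (by omega)
  rw [uWordPlus, wordProd_append, Equiv.Perm.mul_apply, wordProd_append,
    Equiv.Perm.mul_apply]
  have hone : wordProd n [n] = simpleRefl n n := by
    rw [show [n] = n :: ([] : List ℕ) from rfl, wordProd_cons, wordProd_nil, mul_one]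
  rw [hone]
  by_cases hx1 : x = 1
  · have e1 : wordProd n ((List.range (n - 2)).reverse.map (· + 1)) x = (n : ℤ) - 1 := by
      rw [hB]; push_cast; split_ifs <;> omega
    have e2 : simpleRefl n n ((n : ℤ) - 1) = -(n : ℤ) := by
      rw [snval (by omega)]; split_ifs <;> omega
    have e3 : wordProd n ((List.range (n - j)).map fun t => j + t) (-(n : ℤ)) = -(j : ℤ) := by
      rw [hA]; push_cast; split_ifs <;> omega
    rw [e1, e2, e3]
    split_ifs <;> omega
  · by_cases hx2 : x ≤ (n : ℤ) - 1
    · have e1 : wordProd n ((List.range (n - 2)).reverse.map (· + 1)) x = x - 1 := by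
        rw [hB]; push_cast; split_ifs <;> omega
      have e2 : simpleRefl n n (x - 1) = x - 1 := by
        rw [snval (by omega)]; split_ifs <;> omega
      rw [e1, e2, hA]
      push_cast
      split_ifs <;> omega
    · have hxn : x = (n : ℤ) := by omega
      have e1 : wordProd n ((List.range (n - 2)).reverse.map (· + 1)) x = x := by
        rw [hB]; push_cast; split_ifs <;> omega
      have e2 : simpleRefl n n x = -((n : ℤ) - 1) := by
        rw [snval (by omega)]; split_ifs <;> omega
      rw [e1, e2, hA]
      push_cast
      split_ifs <;> omega


-- placeholders for remaining lemmas
lemma NN_le_length {n : ℕ} (hn : 4 ≤ n) {L : List ℕ} (hL : IsWord n L) :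
    NN n (wordProd n L) ≤ L.length := by
  induction L using List.reverseRecOn with
  | nil => rw [wordProd_nil, NN_one]; simp
  | append_singleton L i ih =>
    have hi := hL i (by simp)
    have hL' : IsWord n L := fun k hk => hL k (by simp [hk])
    have hlen : (L ++ [i]).length = L.length + 1 := by simp
    rw [hlen, wordProd_append,
      show wordProd n [i] = simpleRefl n i by
        rw [show [i] = i :: ([] : List ℕ) from rfl, wordProd_cons, wordProd_nil, mul_one]]
    by_cases h : i < n
    · have := NN_mul_lt (wordProd n L) hi.1 h
      have := tt_symm_le (wordProd n L (i : ℤ)) (wordProd n L ((i : ℤ) + 1))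
      have := ih hL'
      omega
    · have hin : i = n := by omega
      rw [hin]
      have := NN_mul_n hn (wordProd n L) (wordProd_odd (by omega) hL')
      have := tt_flip_le (wordProd n L ((n : ℤ) - 1)) (wordProd n L (n : ℤ))
      have := ih hL'
      omega

lemma uWord_isWord {n j : ℕ} (hn : 4 ≤ n) (hj2 : 2 ≤ j) (hjn : j ≤ n) :
    IsWord n (uWordPlus n j) := by
  intro i hi
  simp only [uWordPlus, List.mem_append, List.mem_map, List.mem_range,
    List.mem_singleton, List.mem_reverse] at hi
  rcases hi with (⟨t, ht, rfl⟩ | rfl) | ⟨t, ht, rfl⟩ <;> omega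

lemma uWord_length {n j : ℕ} (hn : 4 ≤ n) (hj2 : 2 ≤ j) (hjn : j ≤ n) :
    (uWordPlus n j).length = (n - 1) + (n - j) := by
  simp only [uWordPlus, List.length_append, List.length_map, List.length_range,
    List.length_singleton, List.length_reverse]
  omega

lemma NN_u {n j : ℕ} (hn : 4 ≤ n) (hj2 : 2 ≤ j) (hjn : j ≤ n) :
    NN n (wordProd n (uWordPlus n j)) = (n - 1) + (n - j) := by
  set u := wordProd n (uWordPlus n j) with hu
  have key : ∀ p ∈ PR n, tt (u p.1) (u p.2)
      = (if p.1 = 1 then 1 else 0) + (if p.1 = 1 ∧ (j : ℤ) < p.2 then 1 else 0) := by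
    intro p hp
    rw [mem_PR] at hp
    obtain ⟨hp1, hp2, hp3⟩ := hp
    by_cases h1 : p.1 = 1
    · have e1 : u p.1 = -(j : ℤ) := by
        rw [hu, uval hn hj2 hjn (by omega) (by omega)]
        split_ifs <;> omega
      have e2 : ((j : ℤ) < p.2 → ((u p.2 ≤ -(j:ℤ) - 1) ∨ ((j : ℤ) < u p.2)))
          ∧ (p.2 ≤ (j : ℤ) → (-(j:ℤ) < u p.2 ∧ u p.2 < (j:ℤ))) := by
        rw [hu, uval hn hj2 hjn (by omega) (by omega)]
        split_ifs <;> constructor <;> intro <;> omega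
      rw [e1]
      unfold tt
      by_cases hq : (j : ℤ) < p.2
      · have := e2.1 hq
        split_ifs <;> omega
      · have := e2.2 (by omega)
        split_ifs <;> omega
    · have hc : 0 < u p.1 ∧ u p.1 ≤ p.1 := by
        rw [hu, uval hn hj2 hjn (by omega) (by omega)]
        split_ifs <;> omega
      have hd : (p.2 - 1 ≤ u p.2) ∨ (u p.2 ≤ -((n : ℤ) - 1) ∧ p.2 = (n : ℤ)) := by
        rw [hu, uval hn hj2 hjn (by omega) (by omega)]
        split_ifs <;> omega
      unfold tt
      split_ifs <;> omega
  rw [NN, Finset.sum_congr rfl key, Finset.sum_add_distrib]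
  have c1 : (∑ p ∈ PR n, if p.1 = 1 then 1 else 0)
      = ((PR n).filter fun p => p.1 = 1).card := by
    rw [Finset.sum_boole, Nat.cast_id]
  have c2 : (∑ p ∈ PR n, if p.1 = 1 ∧ (j : ℤ) < p.2 then 1 else 0)
      = ((PR n).filter fun p => p.1 = 1 ∧ (j : ℤ) < p.2).card := by
    rw [Finset.sum_boole, Nat.cast_id]
  have e1 : ((PR n).filter fun p => p.1 = 1) = {(1 : ℤ)} ×ˢ Finset.Icc (2 : ℤ) (n : ℤ) := by
    ext p
    simp only [Finset.mem_filter, Finset.mem_product, Finset.mem_singleton, Finset.mem_Icc,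
      mem_PR]
    omega
  have e2 : ((PR n).filter fun p => p.1 = 1 ∧ (j : ℤ) < p.2)
      = {(1 : ℤ)} ×ˢ Finset.Icc ((j : ℤ) + 1) (n : ℤ) := by
    ext p
    simp only [Finset.mem_filter, Finset.mem_product, Finset.mem_singleton, Finset.mem_Icc,
      mem_PR]
    omega
  rw [c1, c2, e1, e2, Finset.card_product, Finset.card_product, Finset.card_singleton,
    Int.card_Icc, Int.card_Icc]
  omega

/-- Number of sign changes in `{1, …, n}`. -/
noncomputable def negcard (n : ℕ) (g : Equiv.Perm ℤ) : ℕ :=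
  ((Finset.Icc (1 : ℤ) (n : ℤ)).filter fun x => g x < 0).card

lemma perm_zero {g : Equiv.Perm ℤ} (hodd : ∀ x : ℤ, g (-x) = -(g x)) : g 0 = 0 := by
  have := hodd 0
  simp at this
  omega

lemma perm_ne_zero {g : Equiv.Perm ℤ} (hodd : ∀ x : ℤ, g (-x) = -(g x)) {x : ℤ} (hx : x ≠ 0) :
    g x ≠ 0 := by
  intro h
  exact hx (g.injective (by rw [h, perm_zero hodd]))

lemma perm_bdd {n : ℕ} {g : Equiv.Perm ℤ} (hsupp : ∀ x : ℤ, (n : ℤ) < |x| → g x = x)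
    {x : ℤ} (hx1 : -(n : ℤ) ≤ x) (hx2 : x ≤ (n : ℤ)) : -(n : ℤ) ≤ g x ∧ g x ≤ (n : ℤ) := by
  by_contra h
  have habs : (n : ℤ) < |g x| := by
    rcases abs_cases (g x) with ⟨h', _⟩ | ⟨h', _⟩ <;> omega
  have h2 := hsupp (g x) habs
  have h3 := g.injective h2
  rcases abs_cases (g x) with ⟨h', _⟩ | ⟨h', _⟩ <;> omega

theorem Equiv.Perm.apply_inv_self {α : Type*} (f : Equiv.Perm α) (x : α) : f (f⁻¹ x) = x :=
  Equiv.apply_symm_apply f x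

theorem Equiv.Perm.inv_apply_self {α : Type*} (f : Equiv.Perm α) (x : α) : f⁻¹ (f x) = x :=
  Equiv.symm_apply_apply f x

lemma odd_inv {g : Equiv.Perm ℤ} (hodd : ∀ x : ℤ, g (-x) = -(g x)) (x : ℤ) :
    g⁻¹ (-x) = -(g⁻¹ x) := by
  apply g.injective
  rw [Equiv.Perm.apply_inv_self, hodd, Equiv.Perm.apply_inv_self]

lemma supp_inv {n : ℕ} {g : Equiv.Perm ℤ} (hsupp : ∀ x : ℤ, (n : ℤ) < |x| → g x = x)
    {x : ℤ} (hx : (n : ℤ) < |x|) : g⁻¹ x = x := by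
  apply g.injective
  rw [Equiv.Perm.apply_inv_self, hsupp x hx]

lemma negcard_inv {n : ℕ} {g : Equiv.Perm ℤ} (hodd : ∀ x : ℤ, g (-x) = -(g x))
    (hsupp : ∀ x : ℤ, (n : ℤ) < |x| → g x = x) : negcard n g⁻¹ = negcard n g := by
  unfold negcard
  apply Finset.card_nbij' (fun x => -(g⁻¹ x)) (fun y => -(g y))
  · intro x hx
    simp only [Finset.coe_filter, Set.mem_setOf_eq, Finset.mem_filter, Finset.mem_Icc] at hx
    obtain ⟨⟨hx1, hx2⟩, hx3⟩ := hx
    have hb := perm_bdd (n := n) (g := g⁻¹) (fun y hy => supp_inv hsupp hy) (by omega) hx2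
    have hgv : g (-(g⁻¹ x)) = -x := by rw [hodd, Equiv.Perm.apply_inv_self]
    dsimp only
    refine Finset.mem_filter.mpr ⟨Finset.mem_Icc.mpr ⟨by omega, by omega⟩, by omega⟩
  · intro y hy
    simp only [Finset.coe_filter, Set.mem_setOf_eq, Finset.mem_filter, Finset.mem_Icc] at hy
    obtain ⟨⟨hy1, hy2⟩, hy3⟩ := hy
    have hb := perm_bdd (n := n) (g := g) hsupp (by omega) hy2
    have hgv : g⁻¹ (-(g y)) = -y := by rw [odd_inv hodd, Equiv.Perm.inv_apply_self]
    dsimp only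
    refine Finset.mem_filter.mpr ⟨Finset.mem_Icc.mpr ⟨by omega, by omega⟩, by omega⟩
  · intro x _
    dsimp only
    rw [hodd, Equiv.Perm.apply_inv_self, neg_neg]
  · intro y _
    dsimp only
    rw [odd_inv hodd, Equiv.Perm.inv_apply_self, neg_neg]

lemma even_negcard_mul {n : ℕ} {f g : Equiv.Perm ℤ}
    (hfodd : ∀ x : ℤ, f (-x) = -(f x)) (hgodd : ∀ x : ℤ, g (-x) = -(g x))
    (hgsupp : ∀ x : ℤ, (n : ℤ) < |x| → g x = x)
    (hf : Even (negcard n f)) (hg : Even (negcard n g)) : Even (negcard n (f * g)) := by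
  classical
  have hginvodd : ∀ x : ℤ, g⁻¹ (-x) = -(g⁻¹ x) := odd_inv hgodd
  have hginvsupp : ∀ x : ℤ, (n : ℤ) < |x| → g⁻¹ x = x := fun x hx => supp_inv hgsupp hx
  have hginvne : ∀ x : ℤ, x ≠ 0 → g⁻¹ x ≠ 0 := fun x hx => perm_ne_zero hginvodd hx
  have hfne : ∀ x : ℤ, x ≠ 0 → f x ≠ 0 := fun x hx => perm_ne_zero hfodd hx
  -- negcard f = A + C
  have h2 : negcard n f
      = ((Finset.Icc (1 : ℤ) (n : ℤ)).filter fun x => 0 < g⁻¹ x ∧ f x < 0).card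
      + ((Finset.Icc (1 : ℤ) (n : ℤ)).filter fun x => g⁻¹ x < 0 ∧ f x < 0).card := by
    unfold negcard
    rw [← Finset.card_union_of_disjoint]
    · congr 1
      rw [← Finset.filter_or]
      apply Finset.filter_congr
      intro x hx
      simp only [Finset.mem_Icc] at hx
      have := hginvne x (by omega)
      constructor
      · intro h; omega
      · intro h; omega
    · rw [Finset.disjoint_left]
      intro a ha hb
      simp only [Finset.mem_filter] at ha hb
      omega
  -- negcard g⁻¹ = B + C
  have h3 : negcard n g⁻¹
      = ((Finset.Icc (1 : ℤ) (n : ℤ)).filter fun x => g⁻¹ x < 0 ∧ 0 < f x).card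
      + ((Finset.Icc (1 : ℤ) (n : ℤ)).filter fun x => g⁻¹ x < 0 ∧ f x < 0).card := by
    unfold negcard
    rw [← Finset.card_union_of_disjoint]
    · congr 1
      rw [← Finset.filter_or]
      apply Finset.filter_congr
      intro x hx
      simp only [Finset.mem_Icc] at hx
      have := hfne x (by omega)
      constructor
      · intro h; omega
      · intro h; omega
    · rw [Finset.disjoint_left]
      intro a ha hb
      simp only [Finset.mem_filter] at ha hb
      omega
  -- negcard (f * g) = A + B
  have h1 : negcard n (f * g)
      = ((Finset.Icc (1 : ℤ) (n : ℤ)).filter fun x => 0 < g⁻¹ x ∧ f x < 0).card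
      + ((Finset.Icc (1 : ℤ) (n : ℤ)).filter fun x => g⁻¹ x < 0 ∧ 0 < f x).card := by
    have hD : negcard n (f * g)
        = ((Finset.Icc (1 : ℤ) (n : ℤ)).filter
            fun y => (0 < g⁻¹ y ∧ f y < 0) ∨ (g⁻¹ y < 0 ∧ 0 < f y)).card := by
      unfold negcard
      apply Finset.card_nbij' (fun x => |g x|) (fun y => |g⁻¹ y|)
      · intro x hx
        rw [Finset.mem_coe, Finset.mem_filter, Finset.mem_Icc] at hx
        simp only [Equiv.Perm.mul_apply] at hx
        obtain ⟨⟨hx1, hx2⟩, hx3⟩ := hx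
        have hb := perm_bdd hgsupp (by omega) hx2
        have hgx0 : g x ≠ 0 := perm_ne_zero hgodd (by omega)
        dsimp only
        rcases abs_cases (g x) with ⟨he, hsgn⟩ | ⟨he, hsgn⟩ <;> rw [he]
        · refine Finset.mem_filter.mpr ⟨Finset.mem_Icc.mpr ⟨by omega, by omega⟩,
            Or.inl ⟨?_, hx3⟩⟩
          rw [Equiv.Perm.inv_apply_self]; omega
        · refine Finset.mem_filter.mpr ⟨Finset.mem_Icc.mpr ⟨by omega, by omega⟩,
            Or.inr ⟨?_, ?_⟩⟩
          · have : g⁻¹ (-(g x)) = -x := by rw [hginvodd, Equiv.Perm.inv_apply_self]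
            omega
          · rw [hfodd]; omega
      · intro y hy
        simp only [Finset.coe_filter, Set.mem_setOf_eq, Finset.mem_filter, Finset.mem_Icc] at hy
        obtain ⟨⟨hy1, hy2⟩, hy3⟩ := hy
        have hb := perm_bdd (n := n) (g := g⁻¹) hginvsupp (by omega) hy2
        have hgy0 : g⁻¹ y ≠ 0 := hginvne y (by omega)
        dsimp only
        rcases hy3 with ⟨hs, hf'⟩ | ⟨hs, hf'⟩
        · rw [abs_of_pos hs]
          refine Finset.mem_filter.mpr ⟨Finset.mem_Icc.mpr ⟨by omega, by omega⟩, ?_⟩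
          rw [Equiv.Perm.mul_apply, Equiv.Perm.apply_inv_self]; omega
        · rw [abs_of_neg hs]
          refine Finset.mem_filter.mpr ⟨Finset.mem_Icc.mpr ⟨by omega, by omega⟩, ?_⟩
          rw [Equiv.Perm.mul_apply,
            show g (-(g⁻¹ y)) = -y by rw [hgodd, Equiv.Perm.apply_inv_self], hfodd]
          omega
      · intro x hx
        simp only [Finset.coe_filter, Set.mem_setOf_eq, Finset.mem_filter, Finset.mem_Icc] at hx
        have hgx0 : g x ≠ 0 := perm_ne_zero hgodd (by omega)
        dsimp only
        rcases abs_cases (g x) with ⟨he, hsgn⟩ | ⟨he, hsgn⟩ <;> rw [he]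
        · rw [Equiv.Perm.inv_apply_self]
          rcases abs_cases x with ⟨he2, _⟩ | ⟨he2, _⟩ <;> omega
        · rw [hginvodd, Equiv.Perm.inv_apply_self]
          rcases abs_cases (-x) with ⟨he2, _⟩ | ⟨he2, _⟩ <;> omega
      · intro y hy
        simp only [Finset.coe_filter, Set.mem_setOf_eq, Finset.mem_filter, Finset.mem_Icc] at hy
        have hgy0 : g⁻¹ y ≠ 0 := hginvne y (by omega)
        dsimp only
        rcases abs_cases (g⁻¹ y) with ⟨he, hsgn⟩ | ⟨he, hsgn⟩ <;> rw [he]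
        · rw [Equiv.Perm.apply_inv_self]
          rcases abs_cases y with ⟨he2, _⟩ | ⟨he2, _⟩ <;> omega
        · rw [hgodd, Equiv.Perm.apply_inv_self]
          rcases abs_cases (-y) with ⟨he2, _⟩ | ⟨he2, _⟩ <;> omega
    rw [hD, ← Finset.card_union_of_disjoint]
    · congr 1
      rw [← Finset.filter_or]
    · rw [Finset.disjoint_left]
      intro a ha hb
      simp only [Finset.mem_filter] at ha hb
      omega
  have h4 : negcard n g⁻¹ = negcard n g := negcard_inv hgodd hgsupp
  rw [Nat.even_iff] at hf hg ⊢
  omega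

lemma asc_neg {c d : ℤ} (h : tt c d < tt d c) (hc : c < 0) (hd : d ≠ 0) : d < 0 ∧ c < d := by
  unfold tt at h; split_ifs at h <;> omega

lemma asc_pos {c d : ℤ} (h : tt c d < tt d c) (hc : 0 < c) (hd : 0 < d) : c < d := by
  unfold tt at h; split_ifs at h <;> omega

lemma ascn_notneg {c d : ℤ} (h : tt c d < tt (-d) (-c)) (hc : c < 0) (hd : d < 0) : False := by
  unfold tt at h; split_ifs at h <;> omega

lemma srefl_one {n i : ℕ} (hn : 4 ≤ n) (h2 : 2 ≤ i) (hi : i ≤ n) : simpleRefl n i 1 = 1 := by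
  by_cases h : i < n
  · rw [sval (by omega) h]; split_ifs <;> omega
  · have : i = n := by omega
    rw [this, snval (by omega)]; split_ifs <;> omega

lemma negcard_srefl {n i : ℕ} (hn : 4 ≤ n) (h1 : 1 ≤ i) (hi : i ≤ n) :
    Even (negcard n (simpleRefl n i)) := by
  by_cases h : i < n
  · have he : ((Finset.Icc (1 : ℤ) (n : ℤ)).filter fun x => simpleRefl n i x < 0) = ∅ := by
      apply Finset.filter_eq_empty_iff.mpr
      intro x hx
      simp only [Finset.mem_Icc] at hx
      rw [sval h1 h]; split_ifs <;> omega
    rw [negcard, he, Finset.card_empty]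
    exact Even.zero
  · have hin : i = n := by omega
    have he : ((Finset.Icc (1 : ℤ) (n : ℤ)).filter fun x => simpleRefl n i x < 0)
        = {(n : ℤ) - 1, (n : ℤ)} := by
      ext x
      simp only [Finset.mem_filter, Finset.mem_Icc, Finset.mem_insert, Finset.mem_singleton]
      rw [hin, snval (by omega)]
      constructor
      · rintro ⟨⟨hx1, hx2⟩, hx3⟩
        revert hx3; split_ifs <;> omega
      · rintro (rfl | rfl)
        · refine ⟨⟨by omega, by omega⟩, ?_⟩
          split_ifs <;> omega
        · refine ⟨⟨by omega, by omega⟩, ?_⟩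
          split_ifs <;> omega
    rw [negcard, he, Finset.card_insert_of_notMem (by simp), Finset.card_singleton]
    exact ⟨1, rfl⟩

lemma fix1_mem_closure {n : ℕ} (hn : 4 ≤ n) (v : Equiv.Perm ℤ)
    (hodd : ∀ x : ℤ, v (-x) = -(v x)) (hsupp : ∀ x : ℤ, (n : ℤ) < |x| → v x = x)
    (hv1 : v 1 = 1) (hpar : Even (negcard n v)) :
    v ∈ Subgroup.closure {s : Equiv.Perm ℤ | ∃ i : ℕ, 2 ≤ i ∧ i ≤ n ∧ s = simpleRefl n i} := by
  suffices H : ∀ M : ℕ, ∀ v : Equiv.Perm ℤ, NN n v = M →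
      (∀ x : ℤ, v (-x) = -(v x)) → (∀ x : ℤ, (n : ℤ) < |x| → v x = x) →
      v 1 = 1 → Even (negcard n v) →
      v ∈ Subgroup.closure {s : Equiv.Perm ℤ | ∃ i : ℕ, 2 ≤ i ∧ i ≤ n ∧ s = simpleRefl n i} by
    exact H (NN n v) v rfl hodd hsupp hv1 hpar
  clear hodd hsupp hv1 hpar v
  intro M
  induction M using Nat.strong_induction_on with
  | _ M ih =>
  intro v hM hodd hsupp hv1 hpar
  by_cases hv : v = 1
  · rw [hv]; exact Subgroup.one_mem _
  have hinj : ∀ a b : ℤ, v a = v b → a = b := fun a b h => v.injective h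
  have hne0 : ∀ x : ℤ, x ≠ 0 → v x ≠ 0 := fun x hx => perm_ne_zero hodd hx
  have hnepm : ∀ a b : ℤ, a ≠ -b → v a ≠ -(v b) := by
    intro a b hab h
    exact hab (hinj a (-b) (by rw [hodd, h]))
  have hdesc : ∃ i : ℕ, 2 ≤ i ∧ i ≤ n ∧ NN n (v * simpleRefl n i) < NN n v := by
    by_contra hno
    push_neg at hno
    apply hv
    -- ascents everywhere
    have hasc : ∀ i : ℤ, 2 ≤ i → i < (n : ℤ) → tt (v i) (v (i + 1)) < tt (v (i + 1)) (v i) := by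
      intro i h2i hin
      obtain ⟨i', rfl⟩ : ∃ i' : ℕ, (i' : ℤ) = i := ⟨i.toNat, by omega⟩
      have heq := NN_mul_lt (n := n) v (i := i') (by omega) (by omega)
      have hge := hno i' (by omega) (by omega)
      have hne := tt_symm_ne (hne0 _ (by omega)) (hne0 _ (by omega))
        (fun h => by have := hinj _ _ h; omega)
        (hnepm (i' : ℤ) ((i' : ℤ) + 1) (by omega))
      omega
    have hascn : tt (v ((n : ℤ) - 1)) (v (n : ℤ)) < tt (-(v (n : ℤ))) (-(v ((n : ℤ) - 1))) := by
      have heq := NN_mul_n hn v hodd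
      have hge := hno n (by omega) (le_refl n)
      have hne := tt_flip_ne (hne0 _ (by omega)) (hne0 _ (by omega))
        (fun h => by have := hinj _ _ h; omega)
        (hnepm ((n : ℤ) - 1) (n : ℤ) (by omega))
      omega
    -- positivity on [2, n-1]
    have hpos : ∀ i : ℤ, 2 ≤ i → i ≤ (n : ℤ) - 1 → 0 < v i := by
      intro i h2 hle
      by_contra hneg
      push_neg at hneg
      have hvi : v i < 0 := lt_of_le_of_ne hneg (hne0 i (by omega))
      have prop : ∀ k : ℤ, i ≤ k → k ≤ (n : ℤ) → v k < 0 := by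
        have base : i ≤ (n:ℤ) → v i < 0 := fun _ => hvi
        have step : ∀ k : ℤ, i ≤ k → (k ≤ (n:ℤ) → v k < 0) → ((k + 1) ≤ (n:ℤ) → v (k + 1) < 0) := by
          intro k hk hk2 hk3
          have hvk := hk2 (by omega)
          have := asc_neg (hasc k (by omega) (by omega)) hvk (hne0 _ (by omega))
          omega
        intro k hk
        exact Int.le_induction base step k hk
      have hA := prop ((n : ℤ) - 1) (by omega) (by omega)
      have hB := prop (n : ℤ) (by omega) (by omega)
      exact ascn_notneg hascn hA hB
    -- v n > 0
    have hvn : 0 < v (n : ℤ) := by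
      by_contra hneg
      push_neg at hneg
      have hvnn : v (n : ℤ) < 0 := lt_of_le_of_ne hneg (hne0 _ (by omega))
      have hone : ((Finset.Icc (1 : ℤ) (n : ℤ)).filter fun x => v x < 0) = {(n : ℤ)} := by
        ext x
        simp only [Finset.mem_filter, Finset.mem_Icc, Finset.mem_singleton]
        constructor
        · rintro ⟨⟨hx1, hx2⟩, hx3⟩
          by_contra hne
          have hcase : x = 1 ∨ (2 ≤ x ∧ x ≤ (n : ℤ) - 1) := by omega
          rcases hcase with rfl | ⟨ha, hb⟩
          · omega
          · have := hpos x ha hb; omega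
        · rintro rfl
          exact ⟨⟨by omega, le_refl _⟩, hvnn⟩
      rw [negcard, hone, Finset.card_singleton] at hpar
      simp at hpar
    -- strictly increasing
    have hlt : ∀ i : ℤ, 2 ≤ i → i < (n : ℤ) → v i < v (i + 1) := by
      intro i h2 hin
      have hp1 : 0 < v i := hpos i h2 (by omega)
      have hp2 : 0 < v (i + 1) := by
        rcases eq_or_lt_of_le (by omega : i + 1 ≤ (n : ℤ)) with h | h
        · rw [h]; exact hvn
        · exact hpos (i + 1) (by omega) (by omega)
      exact asc_pos (hasc i h2 hin) hp1 hp2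
    -- lower bound
    have hlow : ∀ i : ℤ, 2 ≤ i → i ≤ (n : ℤ) → i ≤ v i := by
      have base : (2:ℤ) ≤ (n:ℤ) → 2 ≤ v 2 := by
        intro _
        have h1 : 0 < v 2 := hpos 2 (by omega) (by omega)
        have h2 : v 2 ≠ 1 := fun h => by have := hinj 2 1 (by rw [h, hv1]); omega
        omega
      have step : ∀ k : ℤ, 2 ≤ k → (k ≤ (n:ℤ) → k ≤ v k) → ((k + 1) ≤ (n:ℤ) → k + 1 ≤ v (k + 1)) := by
        intro k hk hk2 hk3
        have := hk2 (by omega)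
        have := hlt k hk (by omega)
        omega
      intro i h2
      exact Int.le_induction base step i h2
    -- upper bound
    have hup : ∀ m : ℕ, ∀ i : ℤ, 2 ≤ i → i ≤ (n : ℤ) → (n : ℤ) - i ≤ (m : ℤ) → v i ≤ i := by
      intro m
      induction m with
      | zero =>
        intro i h2 hin hm
        have : i = (n : ℤ) := by omega
        subst this
        exact (perm_bdd hsupp (by omega) (le_refl _)).2
      | succ m ihm =>
        intro i h2 hin hm
        rcases eq_or_lt_of_le hin with h | h
        · subst h
          exact (perm_bdd hsupp (by omega) (le_refl _)).2
        · have h1 := hlt i h2 (by omega)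
          have h2' := ihm (i + 1) (by omega) (by omega) (by push_cast; omega)
          omega
    have key : ∀ x : ℤ, 1 ≤ x → x ≤ (n : ℤ) → v x = x := by
      intro x h1 h2
      rcases eq_or_lt_of_le h1 with h | h
      · rw [← h]; exact hv1
      · exact le_antisymm (hup n x (by omega) h2 (by omega)) (hlow x (by omega) h2)
    apply Equiv.ext
    intro x
    simp only [Equiv.Perm.coe_one, id_eq]
    rcases lt_trichotomy x 0 with h | rfl | h
    · by_cases hxn : -(n : ℤ) ≤ x
      · have : v (-(-x)) = -(v (-x)) := hodd (-x)
        rw [neg_neg] at this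
        rw [this, key (-x) (by omega) (by omega)]
        omega
      · exact hsupp x (by rcases abs_cases x with ⟨h', _⟩ | ⟨h', _⟩ <;> omega)
    · exact perm_zero hodd
    · by_cases hxn : x ≤ (n : ℤ)
      · exact key x (by omega) hxn
      · exact hsupp x (by rcases abs_cases x with ⟨h', _⟩ | ⟨h', _⟩ <;> omega)
  obtain ⟨i, hi2, hin, hlt⟩ := hdesc
  have hsodd : ∀ x : ℤ, simpleRefl n i (-x) = -(simpleRefl n i x) :=
    srefl_odd (by omega) (by omega) hin
  have hssupp : ∀ x : ℤ, (n : ℤ) < |x| → simpleRefl n i x = x :=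
    fun x hx => srefl_supp (by omega) (by omega) hin hx
  have hmem : v * simpleRefl n i ∈
      Subgroup.closure {s : Equiv.Perm ℤ | ∃ i : ℕ, 2 ≤ i ∧ i ≤ n ∧ s = simpleRefl n i} := by
    apply ih (NN n (v * simpleRefl n i)) (by omega) _ rfl
    · intro x
      rw [Equiv.Perm.mul_apply, Equiv.Perm.mul_apply, hsodd, hodd]
    · intro x hx
      rw [Equiv.Perm.mul_apply, hssupp x hx, hsupp x hx]
    · rw [Equiv.Perm.mul_apply, srefl_one hn hi2 hin, hv1]
    · exact even_negcard_mul hodd hsodd hssupp hpar (negcard_srefl hn (by omega) hin)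
  have hv_eq : v = (v * simpleRefl n i) * (simpleRefl n i)⁻¹ := by group
  rw [hv_eq]
  exact Subgroup.mul_mem _ hmem
    (Subgroup.inv_mem _ (Subgroup.subset_closure ⟨i, hi2, hin, rfl⟩))

lemma tt_step {c d : ℤ} (hc : 0 < c) (hd : c < d ∨ (d < 0 ∧ c < -d)) :
    tt d c = tt c d + 1 := by
  unfold tt; split_ifs <;> omega

lemma tt_stepn {c d : ℤ} (hc : 0 < c) (hd : d < 0) (h1 : d < -c) (h2 : c < -d) :
    tt (-d) (-c) = tt c d + 1 := by
  unfold tt; split_ifs <;> omega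

lemma weylLength_le {n : ℕ} {w : Equiv.Perm ℤ} {L : List ℕ} (hL : IsWord n L)
    (hprod : wordProd n L = w) : weylLength n w ≤ L.length :=
  Nat.sInf_le ⟨L, hL, rfl, hprod⟩

lemma NN_le_weylLength {n : ℕ} (hn : 4 ≤ n) {w : Equiv.Perm ℤ}
    (hex : ∃ L, IsWord n L ∧ wordProd n L = w) : NN n w ≤ weylLength n w := by
  obtain ⟨L0, h1, h2⟩ := hex
  have hne : {l | ∃ L : List ℕ, IsWord n L ∧ L.length = l ∧ wordProd n L = w}.Nonempty :=
    ⟨L0.length, L0, h1, rfl, h2⟩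
  obtain ⟨L, hL, hlen, hprod⟩ := Nat.sInf_mem hne
  calc NN n w = NN n (wordProd n L) := by rw [hprod]
    _ ≤ L.length := NN_le_length hn hL
    _ = weylLength n w := hlen

lemma NN_u_mul {n j i : ℕ} (hn : 4 ≤ n) (hj2 : 2 ≤ j) (hjn : j ≤ n) (h2 : 2 ≤ i)
    (hin : i ≤ n) :
    NN n (wordProd n (uWordPlus n j) * simpleRefl n i)
      = NN n (wordProd n (uWordPlus n j)) + 1 := by
  set u := wordProd n (uWordPlus n j) with hu
  by_cases h : i < n
  · have heq := NN_mul_lt (n := n) u (i := i) (by omega) h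
    have hfacts : 0 < u (i : ℤ) ∧
        (u (i : ℤ) < u ((i : ℤ) + 1) ∨ (u ((i : ℤ) + 1) < 0 ∧ u (i : ℤ) < -(u ((i : ℤ) + 1)))) := by
      rw [hu, uval hn hj2 hjn (x := (i : ℤ)) (by omega) (by omega),
        uval hn hj2 hjn (x := (i : ℤ) + 1) (by omega) (by omega)]
      split_ifs <;> omega
    have := tt_step hfacts.1 hfacts.2
    omega
  · have hin' : i = n := by omega
    rw [hin']
    have hodd : ∀ x : ℤ, u (-x) = -(u x) :=
      wordProd_odd (by omega) (uWord_isWord hn hj2 hjn)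
    have heq := NN_mul_n hn u hodd
    have hfacts : 0 < u ((n : ℤ) - 1) ∧ u (n : ℤ) < 0 ∧ u (n : ℤ) < -(u ((n : ℤ) - 1))
        ∧ u ((n : ℤ) - 1) < -(u (n : ℤ)) := by
      rw [hu, uval hn hj2 hjn (x := (n : ℤ) - 1) (by omega) (by omega),
        uval hn hj2 hjn (x := (n : ℤ)) (by omega) (by omega)]
      split_ifs <;> omega
    have := tt_stepn hfacts.1 hfacts.2.1 hfacts.2.2.1 hfacts.2.2.2
    omega

lemma weylLength_u {n j : ℕ} (hn : 4 ≤ n) (hj2 : 2 ≤ j) (hjn : j ≤ n) :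
    weylLength n (wordProd n (uWordPlus n j)) = (n - 1) + (n - j) := by
  apply le_antisymm
  · have := weylLength_le (uWord_isWord hn hj2 hjn) rfl
    rw [uWord_length hn hj2 hjn] at this
    exact this
  · have := NN_le_weylLength hn (w := wordProd n (uWordPlus n j))
      ⟨uWordPlus n j, uWord_isWord hn hj2 hjn, rfl⟩
    rw [NN_u hn hj2 hjn] at this
    exact this

lemma weylLength_u_mul {n j i : ℕ} (hn : 4 ≤ n) (hj2 : 2 ≤ j) (hjn : j ≤ n) (h2 : 2 ≤ i)
    (hin : i ≤ n) :
    weylLength n (wordProd n (uWordPlus n j) * simpleRefl n i) = (n - 1) + (n - j) + 1 := by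
  have hword : IsWord n (uWordPlus n j ++ [i]) := by
    intro k hk
    rcases List.mem_append.mp hk with h | h
    · exact uWord_isWord hn hj2 hjn k h
    · simp at h; omega
  have hprod : wordProd n (uWordPlus n j ++ [i])
      = wordProd n (uWordPlus n j) * simpleRefl n i := by
    rw [wordProd_append, show wordProd n [i] = simpleRefl n i by
      rw [show [i] = i :: ([] : List ℕ) from rfl, wordProd_cons, wordProd_nil, mul_one]]
  apply le_antisymm
  · have h := weylLength_le hword hprod
    have hL : (uWordPlus n j ++ [i]).length = (n - 1) + (n - j) + 1 := by
      rw [List.length_append, uWord_length hn hj2 hjn]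
      rfl
    omega
  · have := NN_le_weylLength hn (w := wordProd n (uWordPlus n j) * simpleRefl n i)
      ⟨uWordPlus n j ++ [i], hword, hprod⟩
    rw [NN_u_mul hn hj2 hjn h2 hin, NN_u hn hj2 hjn] at this
    exact this

/-- Let `n ≥ 4`, `2 ≤ j ≤ n`, `w` a basic involution in the Weyl
group of type `Dₙ` with `w(1) = -j`, and `u = s_j s_{j+1} ⋯ s_{n-1} sₙ s_{n-2} ⋯ s₂ s₁`.
Then: (a) if `j < n` then `u(1) = -j`, `u(i) = i - 1` for `2 ≤ i ≤ j`, `u(i) = i` for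
`j < i ≤ n - 1`, and `u(n) = -n`; if `j = n` then `u(1) = -n`, `u(i) = i - 1` for
`2 ≤ i ≤ n - 1`, and `u(n) = -(n-1)`; (b) `u⁻¹ w` lies in the subgroup `W̃` generated
by `s₂, …, sₙ` (equivalently, it fixes `1`); (c) `ℓ(u sᵢ) = ℓ(u) + 1` for every
`2 ≤ i ≤ n`. -/
theorem statement14 (n : ℕ) (hn : 4 ≤ n) (j : ℕ) (hj2 : 2 ≤ j) (hjn : j ≤ n)
    (w : Equiv.Perm ℤ) (hw : IsBasicInvolution n w) (hw1 : w 1 = -(j : ℤ)) :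
    ((j < n →
        wordProd n (uWordPlus n j) 1 = -(j : ℤ) ∧
        (∀ i : ℤ, 2 ≤ i → i ≤ (j : ℤ) → wordProd n (uWordPlus n j) i = i - 1) ∧
        (∀ i : ℤ, (j : ℤ) < i → i ≤ (n : ℤ) - 1 → wordProd n (uWordPlus n j) i = i) ∧
        wordProd n (uWordPlus n j) (n : ℤ) = -(n : ℤ)) ∧
      (j = n →
        wordProd n (uWordPlus n j) 1 = -(n : ℤ) ∧
        (∀ i : ℤ, 2 ≤ i → i ≤ (n : ℤ) - 1 → wordProd n (uWordPlus n j) i = i - 1) ∧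
        wordProd n (uWordPlus n j) (n : ℤ) = -((n : ℤ) - 1))) ∧
    ((wordProd n (uWordPlus n j))⁻¹ * w ∈
        Subgroup.closure {s : Equiv.Perm ℤ | ∃ i : ℕ, 2 ≤ i ∧ i ≤ n ∧ s = simpleRefl n i} ∧
      ((wordProd n (uWordPlus n j))⁻¹ * w) 1 = 1) ∧
    (∀ i : ℕ, 2 ≤ i → i ≤ n →
      weylLength n (wordProd n (uWordPlus n j) * simpleRefl n i)
        = weylLength n (wordProd n (uWordPlus n j)) + 1) := by
  have hn2 : (2 : ℕ) ≤ n := by omega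
  obtain ⟨⟨hwodd, hwsupp, hwpar⟩, hwinv, hwbasic⟩ := hw
  have huodd : ∀ x : ℤ, wordProd n (uWordPlus n j) (-x) = -(wordProd n (uWordPlus n j) x) :=
    wordProd_odd (by omega) (uWord_isWord hn hj2 hjn)
  have husupp : ∀ x : ℤ, (n : ℤ) < |x| → wordProd n (uWordPlus n j) x = x :=
    fun x hx => wordProd_supp (by omega) (uWord_isWord hn hj2 hjn) hx
  have hu1 : wordProd n (uWordPlus n j) 1 = -(j : ℤ) := by
    rw [uval hn hj2 hjn (by omega) (by omega)]
    split_ifs <;> omega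
  refine ⟨⟨?_, ?_⟩, ⟨?_, ?_⟩, ?_⟩
  · -- part (a), j < n
    intro hjltn
    refine ⟨hu1, ?_, ?_, ?_⟩
    · intro i h1 h2
      rw [uval hn hj2 hjn (by omega) (by omega)]
      split_ifs <;> omega
    · intro i h1 h2
      rw [uval hn hj2 hjn (by omega) (by omega)]
      split_ifs <;> omega
    · rw [uval hn hj2 hjn (by omega) (by omega)]
      split_ifs <;> omega
  · -- part (a), j = n
    intro hjeq
    refine ⟨?_, ?_, ?_⟩
    · rw [hu1, hjeq]
    · intro i h1 h2
      rw [uval hn hj2 hjn (by omega) (by omega)]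
      split_ifs <;> omega
    · rw [uval hn hj2 hjn (by omega) (by omega)]
      split_ifs <;> omega
  · -- part (b), closure membership
    have hv1 : ((wordProd n (uWordPlus n j))⁻¹ * w) 1 = 1 := by
      rw [Equiv.Perm.mul_apply, hw1, ← hu1, Equiv.Perm.inv_apply_self]
    apply fix1_mem_closure hn
    · intro x
      rw [Equiv.Perm.mul_apply, Equiv.Perm.mul_apply, hwodd, odd_inv huodd]
    · intro x hx
      rw [Equiv.Perm.mul_apply, hwsupp x hx, supp_inv husupp hx]
    · exact hv1
    · -- parity
      have hnu : negcard n (wordProd n (uWordPlus n j)) = 2 := by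
        have hset : ((Finset.Icc (1 : ℤ) (n : ℤ)).filter
            fun x => wordProd n (uWordPlus n j) x < 0) = {1, (n : ℤ)} := by
          ext x
          simp only [Finset.mem_filter, Finset.mem_Icc, Finset.mem_insert, Finset.mem_singleton]
          constructor
          · rintro ⟨⟨hx1, hx2⟩, hx3⟩
            rw [uval hn hj2 hjn hx1 hx2] at hx3
            revert hx3
            split_ifs <;> omega
          · rintro (rfl | rfl)
            · refine ⟨⟨le_refl _, by omega⟩, ?_⟩
              rw [hu1]; omega
            · refine ⟨⟨by omega, le_refl _⟩, ?_⟩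
              rw [uval hn hj2 hjn (by omega) (by omega)]
              split_ifs <;> omega
        rw [negcard, hset, Finset.card_insert_of_notMem (by simp; omega),
          Finset.card_singleton]
      have hinvpar : Even (negcard n (wordProd n (uWordPlus n j))⁻¹) := by
        rw [negcard_inv huodd husupp, hnu]
        exact ⟨1, rfl⟩
      exact even_negcard_mul (fun x => odd_inv huodd x) hwodd hwsupp hinvpar hwpar
  · -- part (b), fixes 1
    rw [Equiv.Perm.mul_apply, hw1, ← hu1, Equiv.Perm.inv_apply_self]
  · -- part (c)
    intro i h2 hin
    rw [weylLength_u_mul hn hj2 hjn h2 hin, weylLength_u hn hj2 hjn]
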